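/- Let K < L be positive integers, v = 1/L, S a K-element subset of {1,…,L}, and g : S → {1,…,K} a bijection. Let (i_t)_{t ≥ 1} be any sequence in {1,…,K} satisfying the strict-rate schedule: i_t = t for 1 ≤ t ≤ K, and for every t > K with t − K = (j−1)·L + s, s ∈ {1,…,L}, if s ∈ S then i_t = g(s) (the values of i_t at non-prescheduled rounds are arbitrary). For an arm i and round t > K let n_{t−1}(i) = #{s ≤ t−1 : i_s = i} be the total number of pulls of arm i before round t and let m_{t−1}(i) be the number of pulls of arm i before round t occurring at non-prescheduled rounds. Then n_{t−1}(i) ≥ ⌊v·(t−1−K)⌋ + m_{t−1}(i) + 1, and consequently n_{t−1}(i) ≥ m_{t−1}(i)·(1 + v/(1 − K·v)). -/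

import Mathlib

namespace FairBandit

/-- Block offset of a round `t > K`:  writing `t - K = (j-1)·L + s` with
`s ∈ {1, …, L}`, the offset is `s`. -/
def offset (K L t : ℕ) : ℕ := (t - K - 1) % L + 1

end FairBandit

open FairBandit

private lemma resid_count_ge (N L r : ℕ) (hr : r < L) :
    N / L ≤ ((Finset.range N).filter (fun u => u % L = r)).card := by
  have hmem : ∀ k ∈ Finset.range (N / L),
      (fun k => k * L + r) k ∈ (Finset.range N).filter (fun u => u % L = r) := by
    intro k hk
    simp only [Finset.mem_range] at hk
    simp only [Finset.mem_filter, Finset.mem_range]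
    constructor
    · calc k * L + r < k * L + L := by omega
        _ = (k + 1) * L := by ring
        _ ≤ (N / L) * L := Nat.mul_le_mul_right _ (by omega)
        _ ≤ N := Nat.div_mul_le_self N L
    · rw [add_comm, Nat.add_mul_mod_self_right, Nat.mod_eq_of_lt hr]
  have hinj : Set.InjOn (fun k => k * L + r) ↑(Finset.range (N / L)) := by
    intro a _ b _ hab
    simp only at hab
    have hL : 0 < L := by omega
    have := Nat.add_right_cancel hab
    exact Nat.eq_of_mul_eq_mul_right hL this
  have := Finset.card_le_card_of_injOn _ hmem hinj
  simpa using this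

private lemma nonS_count_le (N L : ℕ) (hL : 0 < L) (S : Finset ℕ) :
    ((Finset.range N).filter (fun u => u % L + 1 ∉ S)).card ≤
      (N / L + 1) * ((Finset.range L).filter (fun r => r + 1 ∉ S)).card := by
  have key : ((Finset.range N).filter (fun u => u % L + 1 ∉ S)).card ≤
      ((Finset.range (N / L + 1)) ×ˢ ((Finset.range L).filter (fun r => r + 1 ∉ S))).card := by
    apply Finset.card_le_card_of_injOn (fun u => (u / L, u % L))
    · intro u hu
      simp only [Finset.mem_coe, Finset.mem_filter, Finset.mem_range, Finset.mem_product] at hu ⊢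
      refine ⟨?_, Nat.mod_lt _ hL, hu.2⟩
      have : u / L ≤ N / L := Nat.div_le_div_right (le_of_lt hu.1)
      omega
    · intro a _ b _ hab
      simp only [Prod.mk.injEq] at hab
      have h1 := Nat.div_add_mod a L
      have h2 := Nat.div_add_mod b L
      have := hab.1
      have := hab.2
      nlinarith [hab.1, hab.2, Nat.div_add_mod a L, Nat.div_add_mod b L]
  simpa [Finset.card_product] using key

private lemma card_Icc_offset (K L t : ℕ) (ht : K < t) (p : ℕ → Prop) [DecidablePred p] :
    ((Finset.Icc (K + 1) (t - 1)).filter (fun s => p (offset K L s))).card =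
      ((Finset.range (t - 1 - K)).filter (fun u => p (u % L + 1))).card := by
  apply Finset.card_bij' (fun s _ => s - K - 1) (fun u _ => u + K + 1)
  · intro s hs
    simp only [Finset.mem_filter, Finset.mem_Icc, Finset.mem_range] at hs ⊢
    exact ⟨by omega, hs.2⟩
  · intro u hu
    simp only [Finset.mem_filter, Finset.mem_range, Finset.mem_Icc] at hu ⊢
    refine ⟨⟨by omega, by omega⟩, ?_⟩
    have h : u + K + 1 - K - 1 = u := by omega
    simpa [offset, h] using hu.2
  · intro s hs
    simp only [Finset.mem_filter, Finset.mem_Icc] at hs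
    omega
  · intro u _
    omega

/-- Let `K < L` be positive integers, `v = 1/L`, `S` a
`K`-element subset of `{1,…,L}` and `g : S → {1,…,K}` a bijection.  For any
sequence of arms following the strict-rate schedule, for every arm `i` and
round `t > K`, the total number `n_{t-1}(i)` of pulls of arm `i` before round
`t` and the number `m_{t-1}(i)` of those occurring at non-prescheduled rounds
satisfy `n_{t-1}(i) ≥ ⌊v·(t-1-K)⌋ + m_{t-1}(i) + 1`, and consequently
`n_{t-1}(i) ≥ m_{t-1}(i)·(1 + v/(1 - K·v))`. -/
theorem strict_schedule_pull_lower_bound (K L : ℕ) (hK : 0 < K) (hKL : K < L)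
    (S : Finset ℕ) (g : ℕ → Fin K)
    (hS : S ⊆ Finset.Icc 1 L) (hScard : S.card = K)
    (hg : Set.BijOn g ↑S (Set.univ : Set (Fin K)))
    (arm : ℕ → Fin K)
    (hinit : ∀ t, 1 ≤ t → t ≤ K → ((arm t : ℕ) = t - 1))
    (hsched : ∀ t, K < t → offset K L t ∈ S → arm t = g (offset K L t)) :
    ∀ (i : Fin K) (t : ℕ), K < t →
      Nat.floor ((1 / (L : ℝ)) * ((t : ℝ) - 1 - (K : ℝ))) +
          ((Finset.Icc (K + 1) (t - 1)).filter
            (fun s => offset K L s ∉ S ∧ arm s = i)).card + 1 ≤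
        ((Finset.Icc 1 (t - 1)).filter (fun s => arm s = i)).card ∧
      (((Finset.Icc (K + 1) (t - 1)).filter
            (fun s => offset K L s ∉ S ∧ arm s = i)).card : ℝ) *
          (1 + (1 / (L : ℝ)) / (1 - (K : ℝ) * (1 / (L : ℝ)))) ≤
        (((Finset.Icc 1 (t - 1)).filter (fun s => arm s = i)).card : ℝ) := by
  intro i t ht
  set N : ℕ := t - 1 - K with hN
  set m : ℕ := ((Finset.Icc (K + 1) (t - 1)).filter
      (fun s => offset K L s ∉ S ∧ arm s = i)).card with hm_def
  set n : ℕ := ((Finset.Icc 1 (t - 1)).filter (fun s => arm s = i)).card with hn_def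
  have hL : 0 < L := by omega
  -- floor computation
  have hcastN : ((N : ℕ) : ℝ) = (t : ℝ) - 1 - (K : ℝ) := by
    have h : N + 1 + K = t := by omega
    have := congrArg (Nat.cast : ℕ → ℝ) h
    push_cast at this
    linarith
  have hfloor : Nat.floor ((1 / (L : ℝ)) * ((t : ℝ) - 1 - (K : ℝ))) = N / L := by
    rw [← hcastN, one_div, inv_mul_eq_div, Nat.floor_div_natCast, Nat.floor_natCast]
  -- the prescheduled slot for arm i
  obtain ⟨s₀, hs₀S', hgs₀⟩ := hg.surjOn (Set.mem_univ i)
  have hs₀S : s₀ ∈ S := hs₀S'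
  have hs₀bd : 1 ≤ s₀ ∧ s₀ ≤ L := by
    have := hS hs₀S
    simpa [Finset.mem_Icc] using this
  -- split [1, t-1] into [1,K] and [K+1, t-1]
  have hsplit : Finset.Icc 1 (t - 1) = Finset.Icc 1 K ∪ Finset.Icc (K + 1) (t - 1) := by
    ext s
    simp only [Finset.mem_Icc, Finset.mem_union]
    omega
  have hhead : ((Finset.Icc 1 K).filter (fun s => arm s = i)).card = 1 := by
    have hset : (Finset.Icc 1 K).filter (fun s => arm s = i) = {(i : ℕ) + 1} := by
      ext s
      simp only [Finset.mem_filter, Finset.mem_Icc, Finset.mem_singleton]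
      constructor
      · rintro ⟨⟨h1, h2⟩, h3⟩
        have hi := hinit s h1 h2
        have : (i : ℕ) = s - 1 := by rw [← h3]; exact hi
        omega
      · rintro rfl
        have hi : (i : ℕ) < K := i.isLt
        refine ⟨⟨by omega, by omega⟩, ?_⟩
        have h := hinit ((i : ℕ) + 1) (by omega) (by omega)
        exact Fin.ext (by omega)
    rw [hset, Finset.card_singleton]
  -- sets in the tail
  set A : Finset ℕ := (Finset.Icc (K + 1) (t - 1)).filter (fun s => offset K L s = s₀) with hA
  set B : Finset ℕ := (Finset.Icc (K + 1) (t - 1)).filter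
      (fun s => offset K L s ∉ S ∧ arm s = i) with hB
  set C : Finset ℕ := (Finset.Icc (K + 1) (t - 1)).filter (fun s => arm s = i) with hC
  have hAC : A ⊆ C := by
    intro s hs
    simp only [hA, hC, Finset.mem_filter, Finset.mem_Icc] at hs ⊢
    refine ⟨hs.1, ?_⟩
    have hkt : K < s := by omega
    have := hsched s hkt (hs.2 ▸ hs₀S)
    rw [this, hs.2, hgs₀]
  have hBC : B ⊆ C := by
    intro s hs
    simp only [hB, hC, Finset.mem_filter] at hs ⊢
    exact ⟨hs.1, hs.2.2⟩
  have hABdisj : Disjoint A B := by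
    rw [Finset.disjoint_left]
    intro s hsA hsB
    simp only [hA, hB, Finset.mem_filter] at hsA hsB
    exact hsB.2.1 (hsA.2 ▸ hs₀S)
  have hcardA : N / L ≤ A.card := by
    have h1 : A.card = ((Finset.range N).filter (fun u => u % L + 1 = s₀)).card :=
      card_Icc_offset K L t ht (fun x => x = s₀)
    have h2 : (Finset.range N).filter (fun u => u % L + 1 = s₀) =
        (Finset.range N).filter (fun u => u % L = s₀ - 1) := by
      apply Finset.filter_congr
      intro u _
      constructor <;> intro h <;> omega
    rw [h1, h2]
    exact resid_count_ge N L (s₀ - 1) (by omega)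
  have hcardB : m ≤ (N / L + 1) * (L - K) := by
    have hsub : B ⊆ (Finset.Icc (K + 1) (t - 1)).filter (fun s => offset K L s ∉ S) := by
      intro s hs
      simp only [hB, Finset.mem_filter] at hs ⊢
      exact ⟨hs.1, hs.2.1⟩
    have h1 : m ≤ ((Finset.Icc (K + 1) (t - 1)).filter (fun s => offset K L s ∉ S)).card :=
      Finset.card_le_card hsub
    have h2 : ((Finset.Icc (K + 1) (t - 1)).filter (fun s => offset K L s ∉ S)).card =
        ((Finset.range N).filter (fun u => u % L + 1 ∉ S)).card :=
      card_Icc_offset K L t ht (fun x => x ∉ S)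
    have h3 := nonS_count_le N L hL S
    have hcompl : ((Finset.range L).filter (fun r => r + 1 ∉ S)).card = L - K := by
      have hK' : ((Finset.range L).filter (fun r => r + 1 ∈ S)).card = K := by
        rw [← hScard]
        apply Finset.card_bij (fun r _ => r + 1)
        · intro r hr
          simp only [Finset.mem_filter, Finset.mem_range] at hr
          exact hr.2
        · intro a _ b _ hab
          omega
        · intro b hb
          have hbI := hS hb
          simp only [Finset.mem_Icc] at hbI
          refine ⟨b - 1, ?_, by omega⟩
          simp only [Finset.mem_filter, Finset.mem_range]
          constructor
          · omega
          · have : b - 1 + 1 = b := by omega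
            rw [this]; exact hb
      have htot := Finset.card_filter_add_card_filter_not
        (s := Finset.range L) (p := fun r => r + 1 ∈ S)
      simp only [Finset.card_range] at htot
      omega
    rw [hcompl] at h3
    omega
  -- main counting inequality
  have hn : N / L + m + 1 ≤ n := by
    have hsum : n = ((Finset.Icc 1 K).filter (fun s => arm s = i)).card + C.card := by
      rw [hn_def, hsplit, Finset.filter_union]
      apply Finset.card_union_of_disjoint
      rw [Finset.disjoint_left]
      intro s hs1 hs2
      simp only [Finset.mem_filter, Finset.mem_Icc] at hs1 hs2
      omega
    have hABsub : A ∪ B ⊆ C := Finset.union_subset hAC hBC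
    have hAB : A.card + B.card ≤ C.card := by
      rw [← Finset.card_union_of_disjoint hABdisj]
      exact Finset.card_le_card hABsub
    rw [hsum, hhead]
    have : m = B.card := rfl
    omega
  constructor
  · rw [hfloor]
    exact hn
  · -- second inequality
    have hLK1 : 1 ≤ L - K := by omega
    have key : m * (L - K + 1) ≤ n * (L - K) := by
      calc m * (L - K + 1) = m * (L - K) + m := by rw [Nat.mul_succ]
        _ ≤ m * (L - K) + (N / L + 1) * (L - K) := by omega
        _ = (m + (N / L + 1)) * (L - K) := by ring
        _ ≤ n * (L - K) := Nat.mul_le_mul_right _ (by omega)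
    have hL0 : (L : ℝ) ≠ 0 := by positivity
    have hc0 : (0 : ℝ) < (L : ℝ) - (K : ℝ) := by
      have : (K : ℝ) < (L : ℝ) := by exact_mod_cast hKL
      linarith
    have hc0' : (L : ℝ) - (K : ℝ) ≠ 0 := ne_of_gt hc0
    have hdenom : 1 - (K : ℝ) * (1 / (L : ℝ)) ≠ 0 := by
      have : 1 - (K : ℝ) * (1 / (L : ℝ)) = ((L : ℝ) - K) / L := by field_simp
      rw [this]
      positivity
    have hexpr : 1 + (1 / (L : ℝ)) / (1 - (K : ℝ) * (1 / (L : ℝ))) =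
        ((L : ℝ) - K + 1) / ((L : ℝ) - K) := by
      field_simp
    rw [hexpr, ← mul_div_assoc, div_le_iff₀ hc0]
    have keyR : ((m * (L - K + 1) : ℕ) : ℝ) ≤ ((n * (L - K) : ℕ) : ℝ) := by
      exact_mod_cast key
    push_cast [Nat.cast_sub hKL.le] at keyR
    exact keyR
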